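/- Let (β,ι) be a nice pair consisting of a braid word β on n strands and an inversion datum ι on β. Then the ground state s₀ is a valid state, and every valid state s ≠ s₀ satisfies d_x(s) > d_x(s₀); in particular, s₀ is the unique minimizer of the x-degree d_x on the set Ω(β,ι) of valid states. (Hence the ground state is the only state contributing to the leading term of the inverted state sum.) -/
import Mathlib


/-- A braid word on `n` strands with `m` letters. Strand positions are 0-indexed:
the index `p : Fin n` represents the mathematical position `p+1 ∈ {1,…,n}`.
The `t`-th letter is a crossing of sign `ε t` involving the strand positions
`k t` and `k t + 1` (i.e. mathematical positions `k t + 1` and `k t + 2`). -/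
structure BraidWord (n m : ℕ) where
  k : Fin m → ℕ
  hk : ∀ t, k t + 1 < n
  ε : Fin m → ℤ
  hε : ∀ t, ε t = 1 ∨ ε t = -1

namespace BraidWord

variable {n m : ℕ}

/-- Segments of the closed braid diagram: `(p, t)` is the segment at horizontal
position `p` (0-indexed) and level `t` (mod `m`); the `t`-th letter has its bottom
at level `t` and its top at level `t+1`, and `(p, 0)` is the `p`-th closure segment. -/
abbrev Seg (n m : ℕ) := Fin n × Fin m

/-- Segment adjacent to the `t`-th crossing at the bottom left. -/
def eBL (β : BraidWord n m) (t : Fin m) : Seg n m :=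
  (⟨β.k t, by have := β.hk t; omega⟩, t)

/-- Segment adjacent to the `t`-th crossing at the bottom right. -/
def eBR (β : BraidWord n m) (t : Fin m) : Seg n m :=
  (⟨β.k t + 1, β.hk t⟩, t)

/-- Segment adjacent to the `t`-th crossing at the top left. -/
def eTL [NeZero m] (β : BraidWord n m) (t : Fin m) : Seg n m :=
  (⟨β.k t, by have := β.hk t; omega⟩, t + 1)

/-- Segment adjacent to the `t`-th crossing at the top right. -/
def eTR [NeZero m] (β : BraidWord n m) (t : Fin m) : Seg n m :=
  (⟨β.k t + 1, β.hk t⟩, t + 1)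

/-- The writhe of a braid word: the sum of the signs of its crossings. -/
def writhe (β : BraidWord n m) : ℤ := ∑ t, β.ε t

/-- The allowed sign patterns `(BL, BR, TL, TR)` around a crossing of sign `e`. -/
def allowedQuad (e a b c d : ℤ) : Prop :=
  if e = 1 then
    (a = 1 ∧ b = -1 ∧ c = -1 ∧ d = 1) ∨ (a = -1 ∧ b = 1 ∧ c = 1 ∧ d = -1) ∨
    (a = -1 ∧ b = -1 ∧ c = -1 ∧ d = -1) ∨ (a = -1 ∧ b = 1 ∧ c = -1 ∧ d = 1) ∨
    (a = 1 ∧ b = 1 ∧ c = 1 ∧ d = 1)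
  else
    (a = 1 ∧ b = -1 ∧ c = -1 ∧ d = 1) ∨ (a = -1 ∧ b = 1 ∧ c = 1 ∧ d = -1) ∨
    (a = -1 ∧ b = -1 ∧ c = -1 ∧ d = -1) ∨ (a = 1 ∧ b = -1 ∧ c = 1 ∧ d = -1) ∨
    (a = 1 ∧ b = 1 ∧ c = 1 ∧ d = 1)

/-- An inversion datum on a braid word: a `±1`-assignment to each segment,
constant along strands away from crossings, with allowed patterns at crossings. -/
def IsInvDatum [NeZero m] (β : BraidWord n m) (ι : Seg n m → ℤ) : Prop :=
  (∀ e : Seg n m, ι e = 1 ∨ ι e = -1) ∧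
  (∀ (p : Fin n) (t : Fin m), p.val ≠ β.k t → p.val ≠ β.k t + 1 → ι (p, t) = ι (p, t + 1)) ∧
  (∀ t : Fin m, allowedQuad (β.ε t) (ι (β.eBL t)) (ι (β.eBR t)) (ι (β.eTL t)) (ι (β.eTR t)))

/-- A state on a braid word: an integer assignment to each segment, constant along
strands away from crossings, conserved at each crossing. -/
def IsState [NeZero m] (β : BraidWord n m) (s : Seg n m → ℤ) : Prop :=
  (∀ (p : Fin n) (t : Fin m), p.val ≠ β.k t → p.val ≠ β.k t + 1 → s (p, t) = s (p, t + 1)) ∧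
  (∀ t : Fin m, s (β.eBL t) + s (β.eBR t) = s (β.eTL t) + s (β.eTR t))

/-- The sign of an integer, with the convention that the sign of `0` is `+1`. -/
def isign (a : ℤ) : ℤ := if 0 ≤ a then 1 else -1

/-- A state is valid for an inversion datum `ι` if its signs agree with `ι` and the
inequalities required for the extended `R`-matrix to be nonzero hold at each crossing. -/
def IsValid [NeZero m] (β : BraidWord n m) (ι s : Seg n m → ℤ) : Prop :=
  β.IsState s ∧ (∀ e : Seg n m, isign (s e) = ι e) ∧
  ∀ t : Fin m,
    if β.ε t = 1 then s (β.eTR t) ≤ s (β.eBL t) ∨ (0 ≤ s (β.eTR t) ∧ s (β.eBL t) < 0)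
    else s (β.eTL t) ≤ s (β.eBR t) ∨ (0 ≤ s (β.eTL t) ∧ s (β.eBR t) < 0)

/-- The ground state associated to an inversion datum: `s₀(e) = (ι(e) - 1)/2 ∈ {0, -1}`. -/
def groundState (ι : Seg n m → ℤ) : Seg n m → ℤ := fun e => (ι e - 1) / 2

/-- The (minimal) x-degree of a state:
`d_x(s) = -(n-1)/2 + ∑_t ε_t (s(e_BR(t)) + s(e_TR(t)) + 1)/2`. -/
def xdeg [NeZero m] (β : BraidWord n m) (s : Seg n m → ℤ) : ℚ :=
  -((n : ℚ) - 1) / 2 +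
    ∑ t : Fin m, (β.ε t : ℚ) * (((s (β.eBR t) : ℚ) + (s (β.eTR t) : ℚ) + 1) / 2)

/-- A pair (braid word, inversion datum) is nice if every valid state has nonnegative
x-degree and only finitely many valid states have x-degree below any given bound. -/
def IsNice [NeZero m] (β : BraidWord n m) (ι : Seg n m → ℤ) : Prop :=
  (∀ s, β.IsValid ι s → 0 ≤ β.xdeg s) ∧
  ∀ M : ℝ, {s : Seg n m → ℤ | β.IsValid ι s ∧ ((β.xdeg s : ℚ) : ℝ) ≤ M}.Finite

/-- The invariant `ℓ(β,ι) = -∑_{p=2}^{n} ι(b_p)/2 + ∑_t ε_t (1 + ι(e_BR(t))·ι(e_TR(t)))/4`. -/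
def ell [NeZero m] (β : BraidWord n m) (ι : Seg n m → ℤ) : ℚ :=
  -(∑ p : Fin n, if p.val = 0 then 0 else (ι (p, 0) : ℚ)) / 2 +
    ∑ t : Fin m, (β.ε t : ℚ) * ((1 + (ι (β.eBR t) : ℚ) * (ι (β.eTR t) : ℚ)) / 4)

end BraidWord

namespace BraidWord

variable {n m : ℕ}

lemma nonneg_of_isign {a : ℤ} (h : isign a = 1) : 0 ≤ a := by
  unfold isign at h; split at h <;> omega

lemma neg_of_isign {a : ℤ} (h : isign a = -1) : a < 0 := by
  unfold isign at h; split at h <;> omega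

lemma isign_of_nonneg {a : ℤ} (h : 0 ≤ a) : isign a = 1 := by simp [isign, h]

lemma isign_of_neg {a : ℤ} (h : a < 0) : isign a = -1 := by
  simp [isign, not_le.mpr h]

/-- The convex combination `s₀ + c (s - s₀)`. -/
def combo (ι s : Seg n m → ℤ) (c : ℕ) : Seg n m → ℤ :=
  fun e => groundState ι e + (c : ℤ) * (s e - groundState ι e)

lemma groundState_eq (ι : Seg n m → ℤ) (e : Seg n m) :
    groundState ι e = (ι e - 1) / 2 := rfl

/-- The ground state is valid. -/
lemma ground_valid [NeZero m] (β : BraidWord n m) (ι : Seg n m → ℤ)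
    (hι : β.IsInvDatum ι) : β.IsValid ι (groundState ι) := by
  obtain ⟨h1, h2, h3⟩ := hι
  refine ⟨⟨?_, ?_⟩, ?_, ?_⟩
  · intro p t hp1 hp2
    simp only [groundState, h2 p t hp1 hp2]
  · intro t
    have hq := h3 t
    have hε := β.hε t
    unfold allowedQuad at hq
    simp only [groundState_eq]
    split_ifs at hq <;> omega
  · intro e
    rcases h1 e with h | h
    · rw [groundState_eq, h]; norm_num [isign]
    · rw [groundState_eq, h]; norm_num [isign]
  · intro t
    have hq := h3 t
    have hε := β.hε t
    unfold allowedQuad at hq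
    rcases hε with hε | hε <;>
      simp only [hε, if_pos, if_neg (by norm_num : (-1 : ℤ) ≠ 1), if_true] at hq ⊢ <;>
      simp only [groundState_eq] <;> omega

/-- `s₀ + c(s - s₀)` is valid for every `c : ℕ` when `s` is valid. -/
lemma combo_valid [NeZero m] (β : BraidWord n m) (ι s : Seg n m → ℤ)
    (hι : β.IsInvDatum ι) (hs : β.IsValid ι s) (c : ℕ) :
    β.IsValid ι (combo ι s c) := by
  obtain ⟨hι1, hι2, hι3⟩ := hι
  obtain ⟨⟨hsc, hscons⟩, hsgn, hineq⟩ := hs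
  have hc : (0 : ℤ) ≤ (c : ℤ) := Int.natCast_nonneg c
  refine ⟨⟨?_, ?_⟩, ?_, ?_⟩
  · intro p t hp1 hp2
    simp only [combo, groundState, hι2 p t hp1 hp2, hsc p t hp1 hp2]
  · intro t
    have hq := hι3 t
    have hcons := hscons t
    unfold allowedQuad at hq
    simp only [combo, groundState_eq]
    split_ifs at hq <;>
      rcases hq with ⟨hA, hB, hC, hD⟩ | ⟨hA, hB, hC, hD⟩ | ⟨hA, hB, hC, hD⟩ |
        ⟨hA, hB, hC, hD⟩ | ⟨hA, hB, hC, hD⟩ <;>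
      rw [hA, hB, hC, hD] <;> norm_num <;> linear_combination (c : ℤ) * hcons
  · intro e
    rcases hι1 e with h | h
    · have hge : groundState ι e = 0 := by rw [groundState_eq, h]; norm_num
      have hse : 0 ≤ s e := nonneg_of_isign (by rw [hsgn e, h])
      rw [h, combo, hge]
      exact isign_of_nonneg (by nlinarith)
    · have hge : groundState ι e = -1 := by rw [groundState_eq, h]; norm_num
      have hse : s e < 0 := neg_of_isign (by rw [hsgn e, h])
      rw [h, combo, hge]
      refine isign_of_neg ?_
      have : (c : ℤ) * (s e - -1) ≤ 0 := mul_nonpos_of_nonneg_of_nonpos hc (by omega)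
      omega
  · intro t
    have hq := hι3 t
    have hi := hineq t
    have haBL := hsgn (β.eBL t)
    have haBR := hsgn (β.eBR t)
    have haTL := hsgn (β.eTL t)
    have haTR := hsgn (β.eTR t)
    unfold allowedQuad at hq
    rcases β.hε t with hε | hε
    · rw [if_pos hε] at hq hi ⊢
      simp only [combo, groundState_eq]
      rcases hq with ⟨hA, hB, hC, hD⟩ | ⟨hA, hB, hC, hD⟩ | ⟨hA, hB, hC, hD⟩ |
          ⟨hA, hB, hC, hD⟩ | ⟨hA, hB, hC, hD⟩ <;>
        rw [hA] at haBL <;> rw [hD] at haTR <;> rw [hA, hD]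
      · -- (+,-,-,+) : BL ≥ 0, TR ≥ 0
        have h1 : 0 ≤ s (β.eBL t) := nonneg_of_isign haBL
        have h2 : 0 ≤ s (β.eTR t) := nonneg_of_isign haTR
        have h3 : s (β.eTR t) ≤ s (β.eBL t) := by rcases hi with h | h <;> omega
        have := mul_le_mul_of_nonneg_left h3 hc
        left; norm_num; omega
      · -- (-,+,+,-) : BL < 0, TR < 0
        have h1 : s (β.eBL t) < 0 := neg_of_isign haBL
        have h2 : s (β.eTR t) < 0 := neg_of_isign haTR
        have h3 : s (β.eTR t) ≤ s (β.eBL t) := by rcases hi with h | h <;> omega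
        have := mul_le_mul_of_nonneg_left (show s (β.eTR t) + 1 ≤ s (β.eBL t) + 1 by omega) hc
        left; norm_num; omega
      · -- (-,-,-,-)
        have h1 : s (β.eBL t) < 0 := neg_of_isign haBL
        have h2 : s (β.eTR t) < 0 := neg_of_isign haTR
        have h3 : s (β.eTR t) ≤ s (β.eBL t) := by rcases hi with h | h <;> omega
        have := mul_le_mul_of_nonneg_left (show s (β.eTR t) + 1 ≤ s (β.eBL t) + 1 by omega) hc
        left; norm_num; omega
      · -- (-,+,-,+) : BL < 0, TR ≥ 0
        have h1 : s (β.eBL t) < 0 := neg_of_isign haBL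
        have h2 : 0 ≤ s (β.eTR t) := nonneg_of_isign haTR
        have h4 : (c : ℤ) * (s (β.eBL t) + 1) ≤ 0 :=
          mul_nonpos_of_nonneg_of_nonpos hc (by omega)
        have h5 : 0 ≤ (c : ℤ) * s (β.eTR t) := mul_nonneg hc (by omega)
        right; norm_num; omega
      · -- (+,+,+,+)
        have h1 : 0 ≤ s (β.eBL t) := nonneg_of_isign haBL
        have h2 : 0 ≤ s (β.eTR t) := nonneg_of_isign haTR
        have h3 : s (β.eTR t) ≤ s (β.eBL t) := by rcases hi with h | h <;> omega
        have := mul_le_mul_of_nonneg_left h3 hc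
        left; norm_num; omega
    · have hne : β.ε t ≠ 1 := by rw [hε]; norm_num
      rw [if_neg hne] at hq hi ⊢
      simp only [combo, groundState_eq]
      rcases hq with ⟨hA, hB, hC, hD⟩ | ⟨hA, hB, hC, hD⟩ | ⟨hA, hB, hC, hD⟩ |
          ⟨hA, hB, hC, hD⟩ | ⟨hA, hB, hC, hD⟩ <;>
        rw [hB] at haBR <;> rw [hC] at haTL <;> rw [hB, hC]
      · -- (+,-,-,+) : BR < 0, TL < 0
        have h1 : s (β.eBR t) < 0 := neg_of_isign haBR
        have h2 : s (β.eTL t) < 0 := neg_of_isign haTL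
        have h3 : s (β.eTL t) ≤ s (β.eBR t) := by rcases hi with h | h <;> omega
        have := mul_le_mul_of_nonneg_left (show s (β.eTL t) + 1 ≤ s (β.eBR t) + 1 by omega) hc
        left; norm_num; omega
      · -- (-,+,+,-) : BR ≥ 0, TL ≥ 0
        have h1 : 0 ≤ s (β.eBR t) := nonneg_of_isign haBR
        have h2 : 0 ≤ s (β.eTL t) := nonneg_of_isign haTL
        have h3 : s (β.eTL t) ≤ s (β.eBR t) := by rcases hi with h | h <;> omega
        have := mul_le_mul_of_nonneg_left h3 hc
        left; norm_num; omega
      · -- (-,-,-,-)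
        have h1 : s (β.eBR t) < 0 := neg_of_isign haBR
        have h2 : s (β.eTL t) < 0 := neg_of_isign haTL
        have h3 : s (β.eTL t) ≤ s (β.eBR t) := by rcases hi with h | h <;> omega
        have := mul_le_mul_of_nonneg_left (show s (β.eTL t) + 1 ≤ s (β.eBR t) + 1 by omega) hc
        left; norm_num; omega
      · -- (+,-,+,-) : BR < 0, TL ≥ 0
        have h1 : s (β.eBR t) < 0 := neg_of_isign haBR
        have h2 : 0 ≤ s (β.eTL t) := nonneg_of_isign haTL
        have h4 : (c : ℤ) * (s (β.eBR t) + 1) ≤ 0 :=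
          mul_nonpos_of_nonneg_of_nonpos hc (by omega)
        have h5 : 0 ≤ (c : ℤ) * s (β.eTL t) := mul_nonneg hc (by omega)
        right; norm_num; omega
      · -- (+,+,+,+)
        have h1 : 0 ≤ s (β.eBR t) := nonneg_of_isign haBR
        have h2 : 0 ≤ s (β.eTL t) := nonneg_of_isign haTL
        have h3 : s (β.eTL t) ≤ s (β.eBR t) := by rcases hi with h | h <;> omega
        have := mul_le_mul_of_nonneg_left h3 hc
        left; norm_num; omega

lemma xdeg_combo [NeZero m] (β : BraidWord n m) (ι s : Seg n m → ℤ) (c : ℕ) :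
    β.xdeg (combo ι s c) =
      β.xdeg (groundState ι) + (c : ℚ) * (β.xdeg s - β.xdeg (groundState ι)) := by
  unfold xdeg
  have h : ∀ t ∈ (Finset.univ : Finset (Fin m)),
      (β.ε t : ℚ) * (((combo ι s c (β.eBR t) : ℚ) + (combo ι s c (β.eTR t) : ℚ) + 1) / 2) =
      (β.ε t : ℚ) * (((groundState ι (β.eBR t) : ℚ) + (groundState ι (β.eTR t) : ℚ) + 1) / 2)
      + ((c : ℚ) * ((β.ε t : ℚ) * (((s (β.eBR t) : ℚ) + (s (β.eTR t) : ℚ) + 1) / 2))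
        - (c : ℚ) * ((β.ε t : ℚ) * (((groundState ι (β.eBR t) : ℚ)
            + (groundState ι (β.eTR t) : ℚ) + 1) / 2))) := by
    intro t _
    unfold combo
    push_cast
    ring
  rw [Finset.sum_congr rfl h, Finset.sum_add_distrib, Finset.sum_sub_distrib,
    ← Finset.mul_sum, ← Finset.mul_sum]
  ring

end BraidWord

theorem ground_state_unique_minimizer (n m : ℕ) [NeZero m] (β : BraidWord n m)
    (ι : BraidWord.Seg n m → ℤ) (hι : β.IsInvDatum ι) (hnice : β.IsNice ι) :
    β.IsValid ι (BraidWord.groundState ι) ∧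
    ∀ s : BraidWord.Seg n m → ℤ, β.IsValid ι s → s ≠ BraidWord.groundState ι →
      β.xdeg (BraidWord.groundState ι) < β.xdeg s := by
  refine ⟨BraidWord.ground_valid β ι hι, ?_⟩
  intro s hs hne
  by_contra hle
  push_neg at hle
  -- `hle : β.xdeg s ≤ β.xdeg (groundState ι)`
  obtain ⟨e, he⟩ : ∃ e, s e ≠ BraidWord.groundState ι e := by
    by_contra h
    push_neg at h
    exact hne (funext h)
  have hinj : Function.Injective (BraidWord.combo ι s) := by
    intro c1 c2 hc
    have := congrFun hc e
    simp only [BraidWord.combo] at this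
    have hδ : s e - BraidWord.groundState ι e ≠ 0 := by omega
    have : (c1 : ℤ) = (c2 : ℤ) := by
      have h2 : (c1 : ℤ) * (s e - BraidWord.groundState ι e)
          = (c2 : ℤ) * (s e - BraidWord.groundState ι e) := by omega
      exact mul_right_cancel₀ hδ h2
    exact_mod_cast this
  have hmem : ∀ c : ℕ, BraidWord.combo ι s c ∈
      {s' : BraidWord.Seg n m → ℤ | β.IsValid ι s' ∧
        ((β.xdeg s' : ℚ) : ℝ) ≤ ((β.xdeg (BraidWord.groundState ι) : ℚ) : ℝ)} := by
    intro c
    refine ⟨BraidWord.combo_valid β ι s hι hs c, ?_⟩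
    rw [BraidWord.xdeg_combo]
    have h1 : (c : ℚ) * (β.xdeg s - β.xdeg (BraidWord.groundState ι)) ≤ 0 :=
      mul_nonpos_of_nonneg_of_nonpos (by positivity) (by linarith)
    have : β.xdeg (BraidWord.groundState ι)
        + (c : ℚ) * (β.xdeg s - β.xdeg (BraidWord.groundState ι))
        ≤ β.xdeg (BraidWord.groundState ι) := by linarith
    exact_mod_cast this
  exact Set.infinite_of_injective_forall_mem hinj hmem
    (hnice.2 ((β.xdeg (BraidWord.groundState ι) : ℚ) : ℝ))
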